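/- Let K_{r,s} be the complete bipartite graph with parts of sizes r and s, where r, s ≥ 3. Then: (a) every proper coloring c of K_{r,s} that admits an up-color dominating c-set of size 2 uses at least 3 colors; and (b) there exists a proper coloring c of K_{r,s} using exactly 3 colors that admits an up-color dominating c-set of size 2. -/
import Mathlib


/-- `D` is an up-color dominating `c`-set of `G`. -/
def IsUCDomSet {V : Type*} (G : SimpleGraph V) (c : V → ℕ) (D : Finset V) : Prop :=
  (∀ v ∉ D, ∃ d ∈ D, G.Adj v d ∧ c v < c d) ∧ ∀ d ∈ D, 1 ≤ c d

lemma aux_not_all_mem {α : Type*} [DecidableEq α] (D : Finset α) (hD : D.card = 2)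
    (a b c : α) (hab : a ≠ b) (hac : a ≠ c) (hbc : b ≠ c) :
    a ∉ D ∨ b ∉ D ∨ c ∉ D := by
  by_contra h
  push_neg at h
  obtain ⟨ha, hb, hcc⟩ := h
  have hsub : ({a, b, c} : Finset α) ⊆ D := by
    intro x hx; simp at hx; rcases hx with rfl | rfl | rfl <;> assumption
  have hle := Finset.card_le_card hsub
  have h3 : ({a, b, c} : Finset α).card = 3 := by
    rw [Finset.card_insert_of_notMem (by simp [hab, hac]),
      Finset.card_insert_of_notMem (by simp [hbc]), Finset.card_singleton]
  omega

lemma aux_three_le {a b x : ℕ} {S : Finset ℕ} (ha : a ∈ S) (hb : b ∈ S) (hx : x ∈ S)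
    (hab : a ≠ b) (hax : a ≠ x) (hbx : b ≠ x) : 3 ≤ S.card := by
  have hsub : ({a, b, x} : Finset ℕ) ⊆ S := by
    intro y hy; simp at hy; rcases hy with rfl | rfl | rfl <;> assumption
  have h3 : ({a, b, x} : Finset ℕ).card = 3 := by
    rw [Finset.card_insert_of_notMem (by simp [hab, hax]),
      Finset.card_insert_of_notMem (by simp [hbx]), Finset.card_singleton]
  calc 3 = ({a, b, x} : Finset ℕ).card := h3.symm
    _ ≤ S.card := Finset.card_le_card hsub

theorem stmt_12 (r s : ℕ) (hr : 3 ≤ r) (hs : 3 ≤ s) :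
    (∀ c : Fin r ⊕ Fin s → ℕ,
      (∀ ⦃u v⦄, (completeBipartiteGraph (Fin r) (Fin s)).Adj u v → c u ≠ c v) →
      (∃ D : Finset (Fin r ⊕ Fin s),
        IsUCDomSet (completeBipartiteGraph (Fin r) (Fin s)) c D ∧ D.card = 2) →
      3 ≤ (Finset.univ.image c).card) ∧
    (∃ c : Fin r ⊕ Fin s → ℕ,
      (∀ ⦃u v⦄, (completeBipartiteGraph (Fin r) (Fin s)).Adj u v → c u ≠ c v) ∧
      (Finset.univ.image c).card = 3 ∧
      ∃ D : Finset (Fin r ⊕ Fin s),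
        IsUCDomSet (completeBipartiteGraph (Fin r) (Fin s)) c D ∧ D.card = 2) := by
  constructor
  · rintro c hc ⟨D, ⟨hdom, _⟩, hcard⟩
    -- find a left vertex not in D
    have hL : ∃ v : Fin r, Sum.inl v ∉ D := by
      have := aux_not_all_mem D hcard (Sum.inl (⟨0, by omega⟩ : Fin r))
        (Sum.inl ⟨1, by omega⟩) (Sum.inl ⟨2, by omega⟩)
        (by simp [Fin.ext_iff]) (by simp [Fin.ext_iff]) (by simp [Fin.ext_iff])
      rcases this with h | h | h
      exacts [⟨_, h⟩, ⟨_, h⟩, ⟨_, h⟩]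
    have hR : ∃ w : Fin s, Sum.inr w ∉ D := by
      have := aux_not_all_mem D hcard (Sum.inr (⟨0, by omega⟩ : Fin s))
        (Sum.inr ⟨1, by omega⟩) (Sum.inr ⟨2, by omega⟩)
        (by simp [Fin.ext_iff]) (by simp [Fin.ext_iff]) (by simp [Fin.ext_iff])
      rcases this with h | h | h
      exacts [⟨_, h⟩, ⟨_, h⟩, ⟨_, h⟩]
    obtain ⟨v, hv⟩ := hL
    obtain ⟨w, hw⟩ := hR
    obtain ⟨d, hdD, hadj, hlt⟩ := hdom _ hv
    obtain ⟨d', hd'D, hadj', hlt'⟩ := hdom _ hw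
    -- d is a right vertex, d' is a left vertex
    obtain ⟨j, rfl⟩ : ∃ j, d = Sum.inr j := by
      cases d with
      | inl j => simp at hadj
      | inr j => exact ⟨j, rfl⟩
    obtain ⟨i, rfl⟩ : ∃ i, d' = Sum.inl i := by
      cases d' with
      | inl i => exact ⟨i, rfl⟩
      | inr i => simp at hadj'
    have hmem : ∀ x : Fin r ⊕ Fin s, c x ∈ Finset.univ.image c := by
      intro x; exact Finset.mem_image_of_mem c (Finset.mem_univ x)
    have h1 : c (Sum.inl v) ≠ c (Sum.inr j) := Nat.ne_of_lt hlt
    have h2 : c (Sum.inl v) ≠ c (Sum.inr w) := hc (by simp)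
    have h3 : c (Sum.inr j) ≠ c (Sum.inl i) := hc (by simp)
    by_cases h4 : c (Sum.inr w) = c (Sum.inr j)
    · -- then c (inr j) < c (inl i), so c v < c j < c i
      have h5 : c (Sum.inl v) ≠ c (Sum.inl i) := by
        intro he; rw [he] at hlt; omega
      exact aux_three_le (hmem (Sum.inl v)) (hmem (Sum.inr j)) (hmem (Sum.inl i)) h1 h5 h3
    · exact aux_three_le (hmem (Sum.inl v)) (hmem (Sum.inr j)) (hmem (Sum.inr w)) h1 h2
        (fun he => h4 he.symm)
  · refine ⟨Sum.elim (fun i => if (i : ℕ) = 0 then 2 else 0) (fun _ => 1), ?_, ?_, ?_⟩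
    · rintro u v huv
      rcases huv with ⟨hu, hv⟩ | ⟨hu, hv⟩ <;>
      · obtain ⟨i, rfl⟩ := Sum.isLeft_iff.mp ‹_›
        obtain ⟨j, rfl⟩ := Sum.isRight_iff.mp ‹_›
        simp only [Sum.elim_inl, Sum.elim_inr]
        split_ifs <;> omega
    · have heq : Finset.univ.image (Sum.elim (fun i : Fin r => if (i : ℕ) = 0 then 2 else 0)
          (fun _ : Fin s => 1)) = {0, 1, 2} := by
        apply Finset.Subset.antisymm
        · intro x hx
          simp only [Finset.mem_image] at hx
          obtain ⟨y, _, rfl⟩ := hx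
          cases y with
          | inl i => simp only [Sum.elim_inl]; split_ifs <;> simp
          | inr j => simp
        · intro x hx
          simp only [Finset.mem_insert, Finset.mem_singleton] at hx
          rcases hx with rfl | rfl | rfl
          · exact Finset.mem_image.mpr ⟨Sum.inl ⟨1, by omega⟩, Finset.mem_univ _, by simp⟩
          · exact Finset.mem_image.mpr ⟨Sum.inr ⟨0, by omega⟩, Finset.mem_univ _, by simp⟩
          · exact Finset.mem_image.mpr ⟨Sum.inl ⟨0, by omega⟩, Finset.mem_univ _, by simp⟩
      rw [heq]; decide
    · refine ⟨{Sum.inl ⟨0, by omega⟩, Sum.inr ⟨0, by omega⟩}, ⟨?_, ?_⟩, ?_⟩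
      · intro v hv
        simp only [Finset.mem_insert, Finset.mem_singleton] at hv
        push_neg at hv
        obtain ⟨hv1, hv2⟩ := hv
        cases v with
        | inl i =>
          refine ⟨Sum.inr ⟨0, by omega⟩, by simp, by simp, ?_⟩
          have hi : (i : ℕ) ≠ 0 := by
            intro h; apply hv1; congr 1; exact Fin.ext h
          simp [hi]
        | inr j =>
          refine ⟨Sum.inl ⟨0, by omega⟩, by simp, by simp, ?_⟩
          simp
      · intro d hd
        simp only [Finset.mem_insert, Finset.mem_singleton] at hd
        rcases hd with rfl | rfl <;> simp
      · rw [Finset.card_insert_of_notMem (by simp), Finset.card_singleton]
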